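/- Stiffly-accurate property of the ADER-DG matrix A = K⁻¹·M: let τ_0, …, τ_N be pairwise distinct real nodes such that τ_{p*} = 1 for some index p*, let φ_0, …, φ_N be the Lagrange basis, K_pq := φ_p(1)φ_q(1) − ∫₀¹ φ_p′ φ_q dτ, M_pq := ∫₀¹ φ_p φ_q dτ, and w_q := ∫₀¹ φ_q dτ. If K is invertible and A := K⁻¹M, then A_{p*,q} = w_q for every q; consequently the matrix A − 𝟙⊗w, whose (p,q)-entry is A_pq − w_q, is singular: det(A − 𝟙⊗w) = 0. -/

import Mathlib

open Polynomial Matrix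

theorem aderDG_stifflyAccurate (N : ℕ) (τ : Fin (N + 1) → ℝ)
    (hτ : Function.Injective τ)
    (pstar : Fin (N + 1)) (hpstar : τ pstar = 1)
    (φ : Fin (N + 1) → Polynomial ℝ)
    (hdeg : ∀ p, (φ p).degree ≤ (N : WithBot ℕ))
    (hval : ∀ p k, (φ p).eval (τ k) = if p = k then 1 else 0)
    (K M : Matrix (Fin (N + 1)) (Fin (N + 1)) ℝ)
    (hK : ∀ p q, K p q = (φ p).eval 1 * (φ q).eval 1 -
      ∫ t in (0:ℝ)..1, (derivative (φ p)).eval t * (φ q).eval t)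
    (hM : ∀ p q, M p q = ∫ t in (0:ℝ)..1, (φ p).eval t * (φ q).eval t)
    (w : Fin (N + 1) → ℝ)
    (hw : ∀ q, w q = ∫ t in (0:ℝ)..1, (φ q).eval t)
    (hKinv : IsUnit K.det) :
    (∀ q, (K⁻¹ * M) pstar q = w q) ∧
    (Matrix.of fun p q => (K⁻¹ * M) p q - w q).det = 0 := by
  classical
  -- partition of unity: ∑ φ p = 1
  have hsum : (∑ p, φ p) = 1 := by
    have h0 : ((∑ p, φ p) - 1) = 0 := by
      apply Polynomial.eq_zero_of_natDegree_lt_card_of_eval_eq_zero _ hτ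
      · intro k
        simp [Polynomial.eval_finset_sum, hval, Finset.sum_ite_eq]
      · have hdd : ((∑ p, φ p) - 1).degree ≤ (N : WithBot ℕ) := by
          refine le_trans (Polynomial.degree_sub_le _ _) ?_
          refine max_le (le_trans (Polynomial.degree_sum_le _ _) ?_) ?_
          · exact Finset.sup_le fun p _ => hdeg p
          · exact le_trans Polynomial.degree_one_le (by exact_mod_cast Nat.cast_nonneg' N)
        have := Polynomial.natDegree_le_iff_degree_le.mpr hdd
        simpa [Fintype.card_fin] using Nat.lt_succ_of_le this
    linear_combination (norm := ring_nf) h0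
  -- φ q (1) = δ_{q,pstar}
  have hval1 : ∀ q, (φ q).eval 1 = if q = pstar then 1 else 0 := by
    intro q; simpa [hpstar] using hval q pstar
  have hint : ∀ (p : Polynomial ℝ), IntervalIntegrable (fun t => p.eval t)
      MeasureTheory.volume (0:ℝ) 1 :=
    fun p => (Polynomial.continuous p).intervalIntegrable _ _
  -- column sums of K
  have hKsum : ∀ q, ∑ p, K p q = if q = pstar then 1 else 0 := by
    intro q
    have hders : (∑ p, derivative (φ p)) = 0 := by
      rw [← map_sum, hsum]; simp
    calc ∑ p, K p q
        = (∑ p, (φ p).eval 1) * (φ q).eval 1 -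
          ∫ t in (0:ℝ)..1, ∑ p, (derivative (φ p)).eval t * (φ q).eval t := by
          rw [intervalIntegral.integral_finset_sum (f := fun p t => (derivative (φ p)).eval t * (φ q).eval t) (fun p _ =>
            (((derivative (φ p)).continuous.mul (φ q).continuous)).intervalIntegrable _ _)]
          simp [hK, Finset.sum_sub_distrib, Finset.sum_mul]
      _ = (φ q).eval 1 := by
          have h1 : (∑ p, (φ p).eval 1) = 1 := by
            rw [← Polynomial.eval_finset_sum, hsum]; simp
          have h2 : ∀ t : ℝ, (∑ p, (derivative (φ p)).eval t * (φ q).eval t) = 0 := by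
            intro t
            rw [← Finset.sum_mul, ← Polynomial.eval_finset_sum, hders]
            simp
          simp [h1, h2]
      _ = if q = pstar then 1 else 0 := hval1 q
  -- row pstar of K⁻¹ is all ones
  have hKinvrow : ∀ r, K⁻¹ pstar r = 1 := by
    have h1 : (1 : Fin (N+1) → ℝ) ᵥ* K = Pi.single pstar 1 := by
      funext q
      simp only [Matrix.vecMul, dotProduct, Pi.one_apply, one_mul]
      rw [hKsum q, Pi.single_apply]
    have h2 : ((1 : Fin (N+1) → ℝ) ᵥ* K) ᵥ* K⁻¹ = 1 := by
      rw [Matrix.vecMul_vecMul, Matrix.mul_nonsing_inv K hKinv, Matrix.vecMul_one]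
    rw [h1] at h2
    intro r
    have := congrFun h2 r
    rw [Matrix.single_vecMul] at this
    simpa using this
  -- w is the column sum of M
  have hwM : ∀ q, w q = ∑ r, M r q := by
    intro q
    rw [hw]
    rw [Finset.sum_congr rfl (fun r _ => hM r q),
      ← intervalIntegral.integral_finset_sum (f := fun r t => (φ r).eval t * (φ q).eval t) (fun r _ =>
        (((φ r).continuous.mul (φ q).continuous)).intervalIntegrable _ _)]
    congr 1
    funext t
    rw [← Finset.sum_mul, ← Polynomial.eval_finset_sum, hsum]
    simp
  have hrow : ∀ q, (K⁻¹ * M) pstar q = w q := by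
    intro q
    rw [Matrix.mul_apply, hwM q]
    exact Finset.sum_congr rfl fun r _ => by rw [hKinvrow r, one_mul]
  refine ⟨hrow, ?_⟩
  apply Matrix.det_eq_zero_of_row_eq_zero pstar
  intro q
  simp [hrow q]
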